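/- Let D be a triangulated category with partial silting object P, and let X, Y, Z ∈ P^{⊥_{>0}} fit into a distinguished triangle X → Y → Z → ΣX. Then applying the truncation σ_P^{>0} yields a distinguished triangle σ_P^{>0}X → σ_P^{>0}Y → σ_P^{>0}Z → Σσ_P^{>0}X in P^{⊥_ℤ}; in particular the cone of σ_P^{>0}(f) is isomorphic to σ_P^{>0}Z. -/

import Mathlib

open CategoryTheory Limits Pretriangulated ZeroObject

universe v u

namespace Paper

variable {C : Type u} [Category.{v} C] [Preadditive C] [HasZeroObject C]
  [HasShift C ℤ] [∀ n : ℤ, (CategoryTheory.shiftFunctor C n).Additive] [Pretriangulated C]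
  [HasBinaryBiproducts C]

/-- A class of objects closed under isomorphism. -/
def ClosedIso (P : C → Prop) : Prop := ∀ ⦃X Y : C⦄, (X ≅ Y) → P X → P Y

/-- A class of objects closed under extensions. -/
def ExtClosed (P : C → Prop) : Prop :=
  ∀ T : Triangle C, T ∈ (distTriang C) → P T.obj₁ → P T.obj₃ → P T.obj₂

/-- A suspended subcategory: additive (iso-closed, contains 0, closed under finite sums via
extensions), closed under the suspension `Σ = ⟦1⟧` and under extensions. -/
structure Suspended (P : C → Prop) : Prop where
  iso : ClosedIso P
  zero : P 0
  shift : ∀ ⦃X : C⦄, P X → P (X⟦(1:ℤ)⟧)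
  ext : ExtClosed P

/-- A t-structure `(L, G) = (D^{≤0}, D^{>0})`: Hom-orthogonality, every object is an extension,
`L` is suspended; both classes are closed under isomorphism. -/
structure IsTStr (L G : C → Prop) : Prop where
  isoL : ClosedIso L
  isoG : ClosedIso G
  zeroL : L 0
  homZero : ∀ ⦃X Y : C⦄, L X → G Y → ∀ f : X ⟶ Y, f = 0
  trunc : ∀ X : C, ∃ (A B : C) (f : A ⟶ X) (g : X ⟶ B) (h : B ⟶ A⟦(1:ℤ)⟧),
    Triangle.mk f g h ∈ (distTriang C) ∧ L A ∧ G B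
  shiftL : ∀ ⦃X : C⦄, L X → L (X⟦(1:ℤ)⟧)
  extL : ExtClosed L

/-- The right orthogonal `U^{⊥₀}` of a class of objects. -/
def rightOrth (U : C → Prop) (Y : C) : Prop := ∀ X : C, U X → ∀ f : X ⟶ Y, f = 0

/-- `Y ∈ P^{⊥_{≤ m}}`: `Hom(P, Σ^i Y) = 0` for all `i ≤ m`. -/
def perpLe (P : C) (m : ℤ) (Y : C) : Prop := ∀ i : ℤ, i ≤ m → ∀ f : P ⟶ Y⟦i⟧, f = 0

/-- `Y ∈ P^{⊥_{> m}}`: `Hom(P, Σ^i Y) = 0` for all `i > m`. -/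
def perpGt (P : C) (m : ℤ) (Y : C) : Prop := ∀ i : ℤ, m < i → ∀ f : P ⟶ Y⟦i⟧, f = 0

/-- `Y ∈ P^{⊥_ℤ}`: `Hom(P, Σ^i Y) = 0` for all integers `i`. -/
def perpZ (P : C) (Y : C) : Prop := ∀ i : ℤ, ∀ f : P ⟶ Y⟦i⟧, f = 0

/-- `X ∈ ^{⊥_{>0}}P`: `Hom(X, Σ^i P) = 0` for all `i > 0`. -/
def leftPerpGt0 (P : C) (X : C) : Prop := ∀ i : ℤ, 0 < i → ∀ f : X ⟶ P⟦i⟧, f = 0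

/-- `susp(P)`, the smallest suspended subcategory containing `P`. -/
def suspObj (P : C) (X : C) : Prop := ∀ U : C → Prop, Suspended U → U P → U X

/-- An additive subcategory closed under direct summands. -/
structure AddSub (U : C → Prop) : Prop where
  iso : ClosedIso U
  zero : U 0
  biprod : ∀ X Y : C, U X → U Y → U (X ⊞ Y)
  summand : ∀ X Y : C, U (X ⊞ Y) → U X

/-- `add(P)`: the additive closure of `P` (finite direct sums of direct summands). -/
def addObj (P : C) (X : C) : Prop := ∀ U : C → Prop, AddSub U → U P → U X

/-- A thick triangulated subcategory. -/
structure ThickSub (U : C → Prop) : Prop where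
  iso : ClosedIso U
  zero : U 0
  shift : ∀ ⦃X : C⦄, U X → ∀ n : ℤ, U (X⟦n⟧)
  ext : ExtClosed U
  summand : ∀ X Y : C, U (X ⊞ Y) → U X

/-- `thick(P)`: the smallest thick subcategory containing `P`. -/
def thickObj (P : C) (X : C) : Prop := ∀ U : C → Prop, ThickSub U → U P → U X

/-- A triangulated subcategory (iso-closed, shift-closed both ways, extension-closed). -/
structure TriangSub (U : C → Prop) : Prop where
  iso : ClosedIso U
  zero : U 0
  shift : ∀ ⦃X : C⦄, U X → ∀ n : ℤ, U (X⟦n⟧)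
  ext : ExtClosed U

/-- `P` is presilting: `Hom(P, Σ^n P) = 0` for all `n > 0`. -/
def Presilting (P : C) : Prop := ∀ n : ℤ, 0 < n → ∀ f : P ⟶ P⟦n⟧, f = 0

/-- `P` is partial silting: `(susp(P), P^{⊥_{≤0}})` is a t-structure and
`susp(P) ⊆ P^{⊥_{>0}}`. -/
def PartialSilting (P : C) : Prop :=
  IsTStr (suspObj P) (perpLe P 0) ∧ ∀ X : C, suspObj P X → perpGt P 0 X

/-- `S` is silting: partial silting with `susp(S) = S^{⊥_{>0}}`. -/
def Silting (S : C) : Prop :=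
  PartialSilting S ∧ ∀ X : C, suspObj S X ↔ perpGt S 0 X

/-- `X ∈ D^{≤ n}` for the t-structure with aisle `L`. -/
def DLe (L : C → Prop) (n : ℤ) (X : C) : Prop := L (X⟦n⟧)

/-- `X ∈ D^{> m}` for the t-structure with co-aisle `G`. -/
def DGt (G : C → Prop) (m : ℤ) (X : C) : Prop := G (X⟦m⟧)

/-- The t-structure `(L, G)` is bounded. -/
def BoundedTStr (L G : C → Prop) : Prop :=
  ∀ X : C, (∃ n : ℤ, DLe L n X) ∧ (∃ m : ℤ, DGt G m X)

/-- `H` is (a choice of) the `i`-th cohomology `H^i(X) = σ^{≤ i} σ^{> i-1} X` of `X` with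
respect to the t-structure `(L, G)`, expressed by the two truncation triangles. -/
def IsCohomAt (L G : C → Prop) (i : ℤ) (X H : C) : Prop :=
  ∃ (A B B' : C) (f : A ⟶ X) (g : X ⟶ B) (h : B ⟶ A⟦(1:ℤ)⟧)
    (f' : H ⟶ B) (g' : B ⟶ B') (h' : B' ⟶ H⟦(1:ℤ)⟧),
    Triangle.mk f g h ∈ (distTriang C) ∧ DLe L (i-1) A ∧ DGt G (i-1) B ∧
    Triangle.mk f' g' h' ∈ (distTriang C) ∧ DLe L i H ∧ DGt G i B'

/-- The heart `D^0 = D^{≤0} ∩ D^{>-1}` of the t-structure `(L, G)`. -/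
def Heart (L G : C → Prop) (X : C) : Prop := L X ∧ DGt G (-1) X

/-- A t-exact subcategory: a triangulated subcategory closed under the truncation `σ^{≤0}`
of the t-structure `(L, G)`. -/
def TExactSub (L G : C → Prop) (S : C → Prop) : Prop :=
  TriangSub S ∧
    ∀ (X A B : C) (f : A ⟶ X) (g : X ⟶ B) (h : B ⟶ A⟦(1:ℤ)⟧),
      S X → Triangle.mk f g h ∈ (distTriang C) → L A → G B → S A


/-- The class of objects `U` admits coreflections: every object has a couniversal morphism
from `U`, i.e. the inclusion of `U` admits a right adjoint. -/
def HasCoreflections (U : C → Prop) : Prop :=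
  ∀ X : C, ∃ (A : C) (ε : A ⟶ X), U A ∧
    ∀ A' : C, U A' → ∀ g : A' ⟶ X, ∃! g' : A' ⟶ A, g' ≫ ε = g

/-- `X` is a `2_S`-term object: `X ∈ add(S) * Σ add(S)`. -/
def TwoTerm (S X : C) : Prop :=
  ∃ (S₁ S₀ : C) (f : S₁ ⟶ S₀) (g : S₀ ⟶ X) (h : X ⟶ S₁⟦(1:ℤ)⟧),
    Triangle.mk f g h ∈ (distTriang C) ∧ addObj S S₁ ∧ addObj S S₀

/-- `X` is indecomposable. -/
def Indec (X : C) : Prop :=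
  ¬ IsZero X ∧ ∀ Y Z : C, (X ≅ Y ⊞ Z) → IsZero Y ∨ IsZero Z

/-- `add(A)` is contravariantly finite: every object admits a right `add(A)`-approximation. -/
def ContravFinAdd (A : C) : Prop :=
  ∀ X : C, ∃ (Q : C) (q : Q ⟶ X), addObj A Q ∧
    ∀ Q' : C, addObj A Q' → ∀ g : Q' ⟶ X, ∃ g' : Q' ⟶ Q, g' ≫ q = g

/-- `S` is a bounded silting object. -/
def BoundedSilting (S : C) : Prop :=
  Silting S ∧ BoundedTStr (suspObj S) (perpLe S 0)

/-- Hom-finiteness of `C` over a field `k`. -/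
def HomFinite (k : Type w) [Field k] [Linear k C] : Prop :=
  ∀ X Y : C, FiniteDimensional k (X ⟶ Y)

/-- The Krull–Schmidt property: every object is a finite direct sum of objects with local
endomorphism rings. -/
def KrullSchmidt : Prop :=
  ∀ X : C, ∃ l : List C, (∀ Y ∈ l, IsLocalRing (End Y)) ∧
    Nonempty (X ≅ l.foldr (· ⊞ ·) 0)

/-- A wide subcategory of the heart of the t-structure `(L, G)`: closed under isomorphisms,
extensions, kernels and cokernels (the latter two expressed via cones and cohomology). -/
structure HeartWide (L G W : C → Prop) : Prop where
  sub : ∀ ⦃X : C⦄, W X → Heart L G X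
  iso : ClosedIso W
  ext : ∀ (X Y Z : C) (f : X ⟶ Y) (g : Y ⟶ Z) (h : Z ⟶ X⟦(1:ℤ)⟧),
    W X → W Z → Heart L G Y → Triangle.mk f g h ∈ (distTriang C) → W Y
  kerCoker : ∀ (X Y Z : C) (f : X ⟶ Y) (g : Y ⟶ Z) (h : Z ⟶ X⟦(1:ℤ)⟧),
    W X → W Y → Triangle.mk f g h ∈ (distTriang C) →
    (∀ K : C, IsCohomAt L G (-1) Z K → W K) ∧ (∀ Q : C, IsCohomAt L G 0 Z Q → W Q)

/-- The subgroup of relations defining `K₀` of the thick subcategory `S`. -/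
def K0Rel (S : C → Prop) : AddSubgroup (FreeAbelianGroup C) :=
  AddSubgroup.closure
    {x | (∃ X : C, ¬ S X ∧ x = FreeAbelianGroup.of X) ∨
      ∃ T : Triangle C, T ∈ (distTriang C) ∧ S T.obj₁ ∧ S T.obj₂ ∧ S T.obj₃ ∧
        x = FreeAbelianGroup.of T.obj₂ - FreeAbelianGroup.of T.obj₁
          - FreeAbelianGroup.of T.obj₃}

/-- The Grothendieck group of the (thick) subcategory `S`. -/
abbrev K0 (S : C → Prop) := FreeAbelianGroup C ⧸ K0Rel S

/-- The class `[X]` in the Grothendieck group. -/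
def K0cls (S : C → Prop) (X : C) : K0 S :=
  QuotientAddGroup.mk (FreeAbelianGroup.of X)

/-- A `2_S`-term presilting sequence `(X₁, …, X_t)` in the ambient subcategory `Amb` with respect
to the silting object `S`, defined recursively: the last term `X` is an indecomposable `2_S`-term
presilting object, and the truncated sequence is a `2_{σ^{>0}_X T}`-term presilting sequence in
`Amb ∩ X^{⊥_ℤ}`, where `T = X ⊕ Q` is the Bongartz completion of `X`. -/
inductive PresiltSeq : (C → Prop) → C → List C → Prop
  | nil (Amb : C → Prop) (S : C) : PresiltSeq Amb S []
  | cons (Amb : C → Prop) (S X : C) (l : List C)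
      (hX : Amb X) (h2 : TwoTerm S X) (hpre : Presilting X) (hind : Indec X)
      -- Bongartz completion `T = X ⊞ Q`, via an approximation triangle `S → Q → X₀ → ΣS`
      (Q X₀ : C) (i : S ⟶ Q) (p : Q ⟶ X₀) (β : X₀ ⟶ S⟦(1:ℤ)⟧)
      (hB : Triangle.mk i p β ∈ (distTriang C)) (hX₀ : addObj X X₀)
      (happrox : ∀ X' : C, addObj X X' → ∀ g : X' ⟶ S⟦(1:ℤ)⟧, ∃ g', g' ≫ β = g)
      -- the truncation `T' = σ^{>0}_X (X ⊞ Q)`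
      (T' A : C) (f : A ⟶ X ⊞ Q) (g : X ⊞ Q ⟶ T') (h : T' ⟶ A⟦(1:ℤ)⟧)
      (hTr : Triangle.mk f g h ∈ (distTriang C)) (hA : suspObj X A) (hT' : perpLe X 0 T')
      (hrest : PresiltSeq (fun Y => Amb Y ∧ perpZ X Y) T' l) :
      PresiltSeq Amb S (l ++ [X])



section Statement8Helpers

variable {P : C}

private lemma zero_of_iso {Q W W' : C} (e : W ≅ W') (h : ∀ f : Q ⟶ W', f = 0)
    (f : Q ⟶ W) : f = 0 := by
  have h2 := h (f ≫ e.hom)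
  rw [← Category.comp_id f, ← e.hom_inv_id, ← Category.assoc, h2, zero_comp]

private lemma hom_zero₃ {Q : C} {T : Triangle C} (hT : T ∈ distTriang C)
    (h2 : ∀ f : Q ⟶ T.obj₂, f = 0) (h1 : ∀ f : Q ⟶ T.obj₁⟦(1:ℤ)⟧, f = 0)
    (f : Q ⟶ T.obj₃) : f = 0 := by
  obtain ⟨g, hg⟩ := Triangle.coyoneda_exact₃ T hT f (h1 _)
  rw [hg, h2 g, zero_comp]

private lemma perpZ_obj₃ {T : Triangle C} (hT : T ∈ distTriang C)
    (h1 : perpZ P T.obj₁) (h2 : perpZ P T.obj₂) : perpZ P T.obj₃ := by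
  intro i f
  refine hom_zero₃ (Triangle.shift_distinguished T hT i) (fun g => h2 i g) (fun g => ?_) f
  exact zero_of_iso ((shiftFunctorAdd' C i 1 (i+1) rfl).app T.obj₁).symm
    (fun g => h1 (i+1) g) g

private lemma perpZ_of_trunc (hP : PartialSilting P) {A W B : C} {f : A ⟶ W} {g : W ⟶ B}
    {h : B ⟶ A⟦(1:ℤ)⟧} (hT : Triangle.mk f g h ∈ distTriang C)
    (hA : suspObj P A) (hW : perpGt P 0 W) (hB : perpLe P 0 B) : perpZ P B := by
  intro i φ
  rcases le_or_gt i 0 with hi | hi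
  · exact hB i hi φ
  · refine hom_zero₃ (Triangle.shift_distinguished _ hT i) (fun ψ => hW i hi ψ)
      (fun ψ => ?_) φ
    exact zero_of_iso ((shiftFunctorAdd' C i 1 (i+1) rfl).app A).symm
      (fun ψ => hP.2 A hA (i+1) (by omega) ψ) ψ

private lemma refl_surj (hP : PartialSilting P) {T : Triangle C} (hT : T ∈ distTriang C)
    (h1 : suspObj P T.obj₁) {V : C} (hV : perpLe P 0 V) (ψ : T.obj₂ ⟶ V) :
    ∃ φ : T.obj₃ ⟶ V, T.mor₂ ≫ φ = ψ := by
  obtain ⟨φ, hφ⟩ := Triangle.yoneda_exact₂ T hT ψ (hP.1.homZero h1 hV _)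
  exact ⟨φ, hφ.symm⟩

private lemma refl_inj (hP : PartialSilting P) {T : Triangle C} (hT : T ∈ distTriang C)
    (h1 : suspObj P T.obj₁) {V : C} (hV : perpLe P 0 V) (φ : T.obj₃ ⟶ V)
    (h : T.mor₂ ≫ φ = 0) : φ = 0 := by
  obtain ⟨χ, hχ⟩ := Triangle.yoneda_exact₃ T hT φ h
  rw [hχ, hP.1.homZero (hP.1.shiftL h1) hV χ, comp_zero]

private lemma refl_surj_shift (hP : PartialSilting P) {A W B : C} {f : A ⟶ W} {g : W ⟶ B}
    {h : B ⟶ A⟦(1:ℤ)⟧} (hT : Triangle.mk f g h ∈ distTriang C) (hA : suspObj P A)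
    {V : C} (hV : perpLe P 0 V) (ψ : W⟦(1:ℤ)⟧ ⟶ V) :
    ∃ φ : B⟦(1:ℤ)⟧ ⟶ V, g⟦(1:ℤ)⟧' ≫ φ = ψ := by
  have hT3 := rot_of_distTriang _ (rot_of_distTriang _ (rot_of_distTriang _ hT))
  obtain ⟨φ, hφ⟩ := refl_surj hP hT3 (hP.1.shiftL hA) hV ψ
  change B⟦(1:ℤ)⟧ ⟶ V at φ
  dsimp [Triangle.rotate] at hφ
  have hφ' : (-(g⟦(1:ℤ)⟧')) ≫ φ = ψ := hφ
  refine ⟨-φ, ?_⟩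
  rw [Preadditive.comp_neg, ← Preadditive.neg_comp]
  exact hφ'

private lemma refl_inj_shift (hP : PartialSilting P) {A W B : C} {f : A ⟶ W} {g : W ⟶ B}
    {h : B ⟶ A⟦(1:ℤ)⟧} (hT : Triangle.mk f g h ∈ distTriang C) (hA : suspObj P A)
    {V : C} (hV : perpLe P 0 V) (φ : B⟦(1:ℤ)⟧ ⟶ V)
    (h0 : g⟦(1:ℤ)⟧' ≫ φ = 0) : φ = 0 := by
  have hT3 := rot_of_distTriang _ (rot_of_distTriang _ (rot_of_distTriang _ hT))
  refine refl_inj hP hT3 (hP.1.shiftL hA) hV φ ?_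
  show (Triangle.mk f g h).rotate.rotate.rotate.mor₂ ≫ φ = 0
  dsimp [Triangle.rotate]
  show (-(g⟦(1:ℤ)⟧')) ≫ φ = 0
  rw [Preadditive.neg_comp, h0, neg_zero]

end Statement8Helpers

/-- Applying the truncation `σ_P^{>0}` to a distinguished triangle with all
three terms in `P^{⊥_{>0}}` yields a distinguished triangle in `P^{⊥_ℤ}`; in particular the cone
of `σ_P^{>0}(u)` is isomorphic to `σ_P^{>0}Z`. -/
theorem statement8 (P : C) (hP : PartialSilting P)
    (X Y Z : C) (u : X ⟶ Y) (v : Y ⟶ Z) (w : Z ⟶ X⟦(1:ℤ)⟧)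
    (hT : Triangle.mk u v w ∈ (distTriang C))
    (hX : perpGt P 0 X) (hY : perpGt P 0 Y) (hZ : perpGt P 0 Z)
    -- truncation triangles for X, Y and Z
    (AX BX : C) (fX : AX ⟶ X) (gX : X ⟶ BX) (hX' : BX ⟶ AX⟦(1:ℤ)⟧)
    (hTX : Triangle.mk fX gX hX' ∈ (distTriang C)) (hAX : suspObj P AX) (hBX : perpLe P 0 BX)
    (AY BY : C) (fY : AY ⟶ Y) (gY : Y ⟶ BY) (hY' : BY ⟶ AY⟦(1:ℤ)⟧)
    (hTY : Triangle.mk fY gY hY' ∈ (distTriang C)) (hAY : suspObj P AY) (hBY : perpLe P 0 BY)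
    (AZ BZ : C) (fZ : AZ ⟶ Z) (gZ : Z ⟶ BZ) (hZ' : BZ ⟶ AZ⟦(1:ℤ)⟧)
    (hTZ : Triangle.mk fZ gZ hZ' ∈ (distTriang C)) (hAZ : suspObj P AZ) (hBZ : perpLe P 0 BZ)
    -- the induced morphism `σ_P^{>0}(u)`
    (u' : BX ⟶ BY) (hu' : gX ≫ u' = u ≫ gY) :
    perpZ P BX ∧ perpZ P BY ∧ perpZ P BZ ∧
    ∃ (v' : BY ⟶ BZ) (w' : BZ ⟶ BX⟦(1:ℤ)⟧),
      Triangle.mk u' v' w' ∈ (distTriang C) ∧ gY ≫ v' = v ≫ gZ := by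
  have pzBX : perpZ P BX := perpZ_of_trunc hP hTX hAX hX hBX
  have pzBY : perpZ P BY := perpZ_of_trunc hP hTY hAY hY hBY
  have pzBZ : perpZ P BZ := perpZ_of_trunc hP hTZ hAZ hZ hBZ
  refine ⟨pzBX, pzBY, pzBZ, ?_⟩
  obtain ⟨Cn, v₀, w₀, hTC⟩ := Pretriangulated.distinguished_cocone_triangle u'
  have pzC : perpZ P Cn := perpZ_obj₃ hTC pzBX pzBY
  have hGC : perpLe P 0 Cn := fun i _ => pzC i
  obtain ⟨c, hc₁, hc₂⟩ := complete_distinguished_triangle_morphism _ _ hT hTC gX gY hu'.symm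
  change Z ⟶ Cn at c
  replace hc₁ : v ≫ c = gY ≫ v₀ := hc₁
  replace hc₂ : w ≫ gX⟦(1:ℤ)⟧' = c ≫ w₀ := hc₂
  -- s : BZ ⟶ Cn with gZ ≫ s = c
  obtain ⟨s, hs⟩ := refl_surj hP hTZ hAZ hGC c
  change BZ ⟶ Cn at s
  replace hs : gZ ≫ s = c := hs
  -- construct s' : Cn ⟶ BZ with c ≫ s' = gZ
  obtain ⟨ψ₁, hψ₁⟩ := refl_surj hP hTY hAY hBZ (v ≫ gZ)
  change BY ⟶ BZ at ψ₁
  replace hψ₁ : gY ≫ ψ₁ = v ≫ gZ := hψ₁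
  have huv : u ≫ v = 0 := comp_distTriang_mor_zero₁₂ _ hT
  have hu'ψ₁ : u' ≫ ψ₁ = 0 := by
    refine refl_inj hP hTX hAX hBZ _ ?_
    show gX ≫ u' ≫ ψ₁ = 0
    rw [← Category.assoc, hu', Category.assoc, hψ₁, ← Category.assoc, huv, zero_comp]
  obtain ⟨φ, hφ⟩ := Triangle.yoneda_exact₂ _ hTC ψ₁ hu'ψ₁
  change Cn ⟶ BZ at φ
  replace hφ : ψ₁ = v₀ ≫ φ := hφ
  have hvc : v ≫ c ≫ φ = v ≫ gZ := by
    rw [← Category.assoc, hc₁, Category.assoc, ← hφ, hψ₁]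
  have hvθ : v ≫ (gZ - c ≫ φ) = 0 := by
    rw [Preadditive.comp_sub, hvc, sub_self]
  obtain ⟨ξ, hξ⟩ := Triangle.yoneda_exact₃ _ hT _ hvθ
  change X⟦(1:ℤ)⟧ ⟶ BZ at ξ
  replace hξ : gZ - c ≫ φ = w ≫ ξ := hξ
  obtain ⟨ξ', hξ'⟩ := refl_surj_shift hP hTX hAX hBZ ξ
  have hcs' : c ≫ (φ + w₀ ≫ ξ') = gZ := by
    rw [Preadditive.comp_add, ← Category.assoc c w₀, ← hc₂, Category.assoc, hξ', ← hξ]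
    abel
  set s' : Cn ⟶ BZ := φ + w₀ ≫ ξ' with hs'def
  -- injectivity of precomposition with c on maps to Cn
  have hinjC : ∀ (τ : Cn ⟶ Cn), c ≫ τ = 0 → τ = 0 := by
    intro τ hτ
    have h1 : gY ≫ v₀ ≫ τ = 0 := by
      rw [← Category.assoc, ← hc₁, Category.assoc, hτ, comp_zero]
    have h2 : v₀ ≫ τ = 0 := refl_inj hP hTY hAY hGC _ h1
    obtain ⟨χ, hχ⟩ := Triangle.yoneda_exact₃ _ hTC τ h2
    change BX⟦(1:ℤ)⟧ ⟶ Cn at χ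
    replace hχ : τ = w₀ ≫ χ := hχ
    have h3 : w ≫ gX⟦(1:ℤ)⟧' ≫ χ = 0 := by
      rw [← Category.assoc, hc₂, Category.assoc, ← hχ, hτ]
    obtain ⟨β, hβ⟩ := Triangle.yoneda_exact₃ _ (rot_of_distTriang _ hT)
      (gX⟦(1:ℤ)⟧' ≫ χ) h3
    change Y⟦(1:ℤ)⟧ ⟶ Cn at β
    dsimp [Triangle.rotate] at hβ
    replace hβ : gX⟦(1:ℤ)⟧' ≫ χ = (-(u⟦(1:ℤ)⟧')) ≫ β := hβ
    obtain ⟨β', hβ'⟩ := refl_surj_shift hP hTY hAY hGC β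
    have hcomm : gX⟦(1:ℤ)⟧' ≫ u'⟦(1:ℤ)⟧' ≫ β' = u⟦(1:ℤ)⟧' ≫ β := by
      rw [← Category.assoc, ← Functor.map_comp, hu', Functor.map_comp, Category.assoc, hβ']
    have hβ2 : gX⟦(1:ℤ)⟧' ≫ χ = -(u⟦(1:ℤ)⟧' ≫ β) := by
      rw [hβ, Preadditive.neg_comp]
    have h4 : gX⟦(1:ℤ)⟧' ≫ (χ + u'⟦(1:ℤ)⟧' ≫ β') = 0 := by
      rw [Preadditive.comp_add, hβ2, hcomm]
      abel
    have h5 := refl_inj_shift hP hTX hAX hGC _ h4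
    have hχ0 : χ = -(u'⟦(1:ℤ)⟧' ≫ β') := eq_neg_of_add_eq_zero_left h5
    have h6 : w₀ ≫ u'⟦(1:ℤ)⟧' = 0 := comp_distTriang_mor_zero₃₁ _ hTC
    rw [hχ, hχ0, Preadditive.comp_neg, ← Category.assoc, h6, zero_comp, neg_zero]
  have hss' : s ≫ s' = 𝟙 BZ := by
    have h0 : gZ ≫ (s ≫ s' - 𝟙 BZ) = 0 := by
      rw [Preadditive.comp_sub, ← Category.assoc, hs, hcs', Category.comp_id, sub_self]
    have := refl_inj hP hTZ hAZ hBZ _ h0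
    exact sub_eq_zero.mp this
  have hs's : s' ≫ s = 𝟙 Cn := by
    have h0 : c ≫ (s' ≫ s - 𝟙 Cn) = 0 := by
      rw [Preadditive.comp_sub, ← Category.assoc, hcs', hs, Category.comp_id, sub_self]
    have := hinjC _ h0
    rwa [sub_eq_zero] at this
  refine ⟨v₀ ≫ s', s ≫ w₀, ?_, ?_⟩
  · refine isomorphic_distinguished _ hTC _ ?_
    refine Triangle.isoMk _ _ (Iso.refl _) (Iso.refl _) ⟨s, s', hss', hs's⟩ ?_ ?_ ?_
    · show u' ≫ 𝟙 BY = 𝟙 BX ≫ u'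
      rw [Category.comp_id, Category.id_comp]
    · dsimp
      show (v₀ ≫ s') ≫ s = 𝟙 BY ≫ v₀
      rw [Category.assoc, hs's, Category.comp_id, Category.id_comp]
    · show (s ≫ w₀) ≫ (shiftFunctor C (1:ℤ)).map (𝟙 BX) = s ≫ w₀
      rw [CategoryTheory.Functor.map_id, Category.comp_id]
  · rw [← Category.assoc, ← hc₁, Category.assoc, hcs']


end Paper
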